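/- Let S be a nonempty set, U a finite nonempty set, f : S × U → S, and l, g : S → ℝ bounded. For each γ ∈ [0,1), the discounted reach-avoid Bellman operator B_γ[V](s) = γ·max{ g(s), min{ l(s), min_{u∈U} V(f(s,u)) } } + (1−γ)·max{ l(s), g(s) } has a unique fixed point V_γ in the space of bounded real-valued functions on S. -/

import Mathlib

/-- A real-valued function is bounded. -/
def IsBdd {S : Type*} (V : S → ℝ) : Prop := ∃ C, ∀ s, |V s| ≤ C

/-- The discounted reach-avoid Bellman operator. -/
noncomputable def RABackup {S U : Type*} [Fintype U] (f : S → U → S) (l g : S → ℝ)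
    (γ : ℝ) (V : S → ℝ) (s : S) : ℝ :=
  γ * max (g s) (min (l s) (⨅ u, V (f s u))) + (1 - γ) * max (l s) (g s)

private lemma abs_ciInf_sub_ciInf {U : Type*} [Fintype U] [Nonempty U] (a b : U → ℝ) (c : ℝ)
    (h : ∀ u, |a u - b u| ≤ c) : |(⨅ u, a u) - ⨅ u, b u| ≤ c := by
  have key : ∀ (a b : U → ℝ), (∀ u, |a u - b u| ≤ c) → (⨅ u, a u) - (⨅ u, b u) ≤ c := by
    intro a b h
    obtain ⟨j, hj⟩ := Finite.exists_min b
    have h1 : (⨅ u, a u) ≤ a j := ciInf_le (Set.finite_range a).bddBelow j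
    have h2 : b j ≤ ⨅ u, b u := le_ciInf hj
    have := abs_sub_le_iff.1 (h j)
    linarith [this.1]
  rw [abs_sub_le_iff]
  refine ⟨key a b h, key b a fun u => by rw [abs_sub_comm]; exact h u⟩

theorem RABackup_existsUnique_fixedPoint {S U : Type*} [Nonempty S] [Fintype U] [Nonempty U]
    (f : S → U → S) (l g : S → ℝ) (hl : IsBdd l) (hg : IsBdd g)
    (γ : ℝ) (hγ : γ ∈ Set.Ico (0 : ℝ) 1) :
    ∃! V : {V : S → ℝ // IsBdd V}, ∀ s, RABackup f l g γ V.1 s = V.1 s := by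
  obtain ⟨hγ0, hγ1⟩ := hγ
  obtain ⟨Cl, hCl⟩ := hl
  obtain ⟨Cg, hCg⟩ := hg
  letI : TopologicalSpace S := ⊥
  haveI : DiscreteTopology S := ⟨rfl⟩
  -- bundle a bounded function into a bounded continuous function
  let mkBCF : ∀ (V : S → ℝ), IsBdd V → BoundedContinuousFunction S ℝ := fun V hV =>
    ⟨⟨V, continuous_of_discreteTopology⟩, by
      obtain ⟨C, hC⟩ := hV
      exact ⟨2 * C, fun x y => by
        have := hC x; have := hC y
        rw [Real.dist_eq]
        have : |V x - V y| ≤ |V x| + |V y| := abs_sub _ _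
        linarith [hC x, hC y]⟩⟩
  -- RABackup preserves boundedness
  have hBdd : ∀ (V : S → ℝ), IsBdd V → IsBdd (RABackup f l g γ V) := by
    intro V ⟨C, hC⟩
    refine ⟨γ * (|Cg| + |Cl| + |C|) + (1 - γ) * (|Cl| + |Cg|), fun s => ?_⟩
    have hinf : |⨅ u, V (f s u)| ≤ |C| := by
      have h1 : (⨅ u, V (f s u)) ≤ |C| := by
        obtain ⟨u⟩ := ‹Nonempty U›
        exact le_trans (ciInf_le (Set.finite_range _).bddBelow u)
          (le_trans (le_abs_self _) ((hC _).trans (le_abs_self C)))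
      have h2 : -|C| ≤ ⨅ u, V (f s u) := le_ciInf fun u => by
        have := abs_le.1 ((hC (f s u)).trans (le_abs_self C)); linarith [this.1]
      rw [abs_le]; exact ⟨h2, h1⟩
    have h1 : |max (g s) (min (l s) (⨅ u, V (f s u)))| ≤ |Cg| + |Cl| + |C| := by
      have hgs := abs_le.1 ((hCg s).trans (le_abs_self _))
      have hls := abs_le.1 ((hCl s).trans (le_abs_self _))
      have hi := abs_le.1 hinf
      rw [abs_le]
      constructor
      · simp only [le_max_iff]; left; linarith
      · simp only [max_le_iff, min_le_iff]
        exact ⟨by linarith, Or.inl (by linarith)⟩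
    have h2 : |max (l s) (g s)| ≤ |Cl| + |Cg| := by
      have hgs := abs_le.1 ((hCg s).trans (le_abs_self _))
      have hls := abs_le.1 ((hCl s).trans (le_abs_self _))
      rw [abs_le]
      exact ⟨by simp only [le_max_iff]; left; linarith,
        by simp only [max_le_iff]; exact ⟨by linarith, by linarith⟩⟩
    unfold RABackup
    calc |γ * max (g s) (min (l s) (⨅ u, V (f s u))) + (1 - γ) * max (l s) (g s)|
        ≤ |γ * max (g s) (min (l s) (⨅ u, V (f s u)))| + |(1 - γ) * max (l s) (g s)| :=
          abs_add_le _ _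
      _ ≤ γ * (|Cg| + |Cl| + |C|) + (1 - γ) * (|Cl| + |Cg|) := by
          rw [abs_mul, abs_mul, abs_of_nonneg hγ0, abs_of_nonneg (by linarith : (0:ℝ) ≤ 1 - γ)]
          gcongr
  -- the operator on bounded continuous functions
  let T : (BoundedContinuousFunction S ℝ) → (BoundedContinuousFunction S ℝ) := fun V =>
    mkBCF (RABackup f l g γ V) (hBdd V ⟨‖V‖, fun s => V.norm_coe_le_norm s⟩)
  have hT_apply : ∀ (V : BoundedContinuousFunction S ℝ) (s : S), T V s = RABackup f l g γ V s := fun V s => rfl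
  -- contraction estimate
  have hdist : ∀ (V W : BoundedContinuousFunction S ℝ) (s : S), dist (T V s) (T W s) ≤ γ * dist V W := by
    intro V W s
    rw [hT_apply, hT_apply, Real.dist_eq]
    unfold RABackup
    have key : |max (g s) (min (l s) (⨅ u, V (f s u))) -
        max (g s) (min (l s) (⨅ u, W (f s u)))| ≤ dist V W := by
      have h1 : |(⨅ u, V (f s u)) - ⨅ u, W (f s u)| ≤ dist V W :=
        abs_ciInf_sub_ciInf _ _ _ fun u => by
          rw [← Real.dist_eq]; exact BoundedContinuousFunction.dist_coe_le_dist _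
      calc |max (g s) (min (l s) (⨅ u, V (f s u))) - max (g s) (min (l s) (⨅ u, W (f s u)))|
          ≤ |min (l s) (⨅ u, V (f s u)) - min (l s) (⨅ u, W (f s u))| := by
            rw [max_comm (g s), max_comm (g s)]; exact abs_max_sub_max_le_abs _ _ _
        _ ≤ |(⨅ u, V (f s u)) - ⨅ u, W (f s u)| := by
            simpa using abs_min_sub_min_le_max (l s) (⨅ u, V (f s u)) (l s) (⨅ u, W (f s u))
        _ ≤ dist V W := h1
    have : γ * max (g s) (min (l s) (⨅ u, V (f s u))) + (1 - γ) * max (l s) (g s) -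
        (γ * max (g s) (min (l s) (⨅ u, W (f s u))) + (1 - γ) * max (l s) (g s)) =
        γ * (max (g s) (min (l s) (⨅ u, V (f s u))) - max (g s) (min (l s) (⨅ u, W (f s u)))) := by
      ring
    rw [this, abs_mul, abs_of_nonneg hγ0]
    exact mul_le_mul_of_nonneg_left key hγ0
  set K : NNReal := ⟨γ, hγ0⟩ with hK
  have hcontr : ContractingWith K T := by
    constructor
    · exact_mod_cast hγ1
    · intro V W
      rw [edist_dist, edist_dist]
      have hd : dist (T V) (T W) ≤ γ * dist V W :=
        BoundedContinuousFunction.dist_le (mul_nonneg hγ0 dist_nonneg) |>.2 (hdist V W)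
      calc ENNReal.ofReal (dist (T V) (T W)) ≤ ENNReal.ofReal (γ * dist V W) :=
            ENNReal.ofReal_le_ofReal hd
        _ = (K : ENNReal) * ENNReal.ofReal (dist V W) := by
            rw [ENNReal.ofReal_mul hγ0, ENNReal.ofReal_eq_coe_nnreal hγ0]
            rfl
  set x := hcontr.fixedPoint T with hxdef
  have hx : T x = x := hcontr.fixedPoint_isFixedPt
  refine ⟨⟨x, ‖x‖, fun s => x.norm_coe_le_norm s⟩, ?_, ?_⟩
  · intro s
    have := congrFun (congrArg (fun h : BoundedContinuousFunction S ℝ => (h : S → ℝ)) hx) s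
    simpa [hT_apply] using this
  · rintro ⟨W, hW⟩ hWfix
    have hWfix' : T (mkBCF W hW) = mkBCF W hW := by
      apply BoundedContinuousFunction.ext
      intro s
      have : (mkBCF W hW : S → ℝ) = W := rfl
      rw [hT_apply]
      simp only [this]
      exact hWfix s
    have := hcontr.fixedPoint_unique' hWfix' hx
    apply Subtype.ext
    exact congrArg (fun h : BoundedContinuousFunction S ℝ => (h : S → ℝ)) this
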